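/- arXiv:1405.0682 — 2 statements merged into one kernel-verified Lean document; each statement's English description precedes it below -/
import Mathlib

section
/- For any squarefree positive integer n and real κ ≥ 0 (with the convention 0^0 = 1), one has ((μ ⋆ (L·τ_{1+κ}))(n) = (log n)·κ^{ω(n)} + (log n)·κ^{ω(n)−1}, where ω(n) is the number of distinct prime divisors of n. -/
open ArithmeticFunction Finset

/-- The divisor-type function `τ_r`, multiplicative with `τ_r(p^m) = Γ(r+m)/(Γ(r)·m!)`. -/
noncomputable def tauR (r : ℝ) : ArithmeticFunction ℝ :=
  ⟨fun n => if n = 0 then 0 else ∏ p ∈ n.primeFactors,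
      Real.Gamma (r + (n.factorization p : ℝ)) /
        (Real.Gamma r * Nat.factorial (n.factorization p)),
    by simp⟩

private lemma tauR_squarefree {r : ℝ} (hr : 0 < r) {d : ℕ} (hd : Squarefree d) :
    tauR r d = r ^ d.primeFactors.card := by
  have h0 : d ≠ 0 := hd.ne_zero
  show (if d = 0 then 0 else _) = _
  rw [if_neg h0]
  rw [Finset.prod_congr rfl (fun p hp => ?_), Finset.prod_const]
  have h1 : d.factorization p = 1 := by
    have := (Nat.squarefree_iff_factorization_le_one h0).mp hd p
    have h2 : 1 ≤ d.factorization p := by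
      rw [← Nat.Prime.pow_dvd_iff_le_factorization (Nat.prime_of_mem_primeFactors hp) h0]
      simpa using Nat.dvd_of_mem_primeFactors hp
    omega
  rw [h1]
  push_cast
  rw [Real.Gamma_add_one hr.ne', Nat.factorial_one]
  field_simp [Real.Gamma_pos_of_pos hr |>.ne']
  norm_num


private lemma sum_divisors_prime_mul {p m : ℕ} (hp : p.Prime) (h : ¬ p ∣ m) (hm : m ≠ 0)
    (f : ℕ → ℝ) :
    ∑ d ∈ (p * m).divisors, f d
      = ∑ d ∈ m.divisors, f d + ∑ d ∈ m.divisors, f (p * d) := by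
  have hinj : Function.Injective (p * ·) := fun a b hab =>
    Nat.eq_of_mul_eq_mul_left hp.pos hab
  have hdisj : Disjoint m.divisors (m.divisors.image (p * ·)) := by
    rw [Finset.disjoint_left]
    rintro d hd hd2
    obtain ⟨e, he, rfl⟩ := Finset.mem_image.mp hd2
    exact h ((dvd_mul_right p e).trans (Nat.mem_divisors.mp hd).1)
  have hset : (p * m).divisors = m.divisors ∪ m.divisors.image (p * ·) := by
    ext d
    simp only [Nat.mem_divisors, Finset.mem_union, Finset.mem_image]
    constructor
    · rintro ⟨hd, -⟩
      by_cases hpd : p ∣ d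
      · obtain ⟨e, rfl⟩ := hpd
        exact Or.inr ⟨e, ⟨(mul_dvd_mul_iff_left hp.pos.ne').mp hd, hm⟩, rfl⟩
      · exact Or.inl ⟨(Nat.Coprime.dvd_of_dvd_mul_left
          (Nat.Coprime.symm ((hp.coprime_iff_not_dvd).mpr hpd)) hd), hm⟩
    · rintro (⟨hd, -⟩ | ⟨e, ⟨he, -⟩, rfl⟩)
      · exact ⟨hd.mul_left p, mul_ne_zero hp.pos.ne' hm⟩
      · exact ⟨mul_dvd_mul_left p he, mul_ne_zero hp.pos.ne' hm⟩
  rw [hset, Finset.sum_union hdisj, Finset.sum_image (fun a _ b _ h => hinj h)]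

private lemma card_primeFactors_prime_mul {p m : ℕ} (hp : p.Prime) (h : ¬ p ∣ m) (hm : m ≠ 0) :
    (p * m).primeFactors.card = m.primeFactors.card + 1 := by
  have hdisj : Disjoint ({p} : Finset ℕ) m.primeFactors := by
    simp only [Finset.disjoint_singleton_left]
    exact fun hc => h (Nat.dvd_of_mem_primeFactors hc)
  rw [Nat.primeFactors_mul hp.pos.ne' hm, hp.primeFactors,
    Finset.card_union_of_disjoint hdisj, Finset.card_singleton]
  omega

private lemma moebius_prime_mul_div {p m d : ℕ} (hp : p.Prime) (h : ¬ p ∣ m)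
    (hd : d ∣ m) (hm : m ≠ 0) :
    ((moebius (p * m / d) : ℤ) : ℝ) = -((moebius (m / d) : ℤ) : ℝ) := by
  rw [Nat.mul_div_assoc p hd]
  have hco : Nat.Coprime p (m / d) :=
    (hp.coprime_iff_not_dvd).mpr fun hc => h (hc.trans (Nat.div_dvd_of_dvd hd))
  rw [isMultiplicative_moebius.map_mul_of_coprime hco, moebius_apply_prime hp]
  push_cast
  ring

private lemma sumG (κ : ℝ) : ∀ n : ℕ, Squarefree n →
    ∑ d ∈ n.divisors, ((moebius (n / d) : ℤ) : ℝ) * (1 + κ) ^ d.primeFactors.card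
      = κ ^ n.primeFactors.card := by
  intro n
  induction n using Nat.strong_induction_on with
  | _ n ih =>
    intro hn
    rcases eq_or_ne n 1 with rfl | hn1
    · simp
    · have hn0 : n ≠ 0 := hn.ne_zero
      set p := n.minFac with hpdef
      have hp : p.Prime := Nat.minFac_prime hn1
      have hpd : p ∣ n := Nat.minFac_dvd n
      obtain ⟨m, hnm⟩ := hpd
      have hm0 : m ≠ 0 := by rintro rfl; exact hn0 (by simp [hnm])
      have hpm : ¬ p ∣ m := by
        intro hc
        exact hp.not_isUnit (hn p (by rw [hnm]; exact mul_dvd_mul_left p hc))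
      have hmsq : Squarefree m := hn.squarefree_of_dvd ⟨p, by rw [hnm]; ring⟩
      have hmlt : m < n := by
        rw [hnm]; exact Nat.lt_mul_iff_one_lt_left (Nat.pos_of_ne_zero hm0) |>.mpr hp.one_lt
      rw [hnm, sum_divisors_prime_mul hp hpm hm0]
      have h1 : ∑ d ∈ m.divisors, ((moebius (p * m / d) : ℤ) : ℝ) * (1 + κ) ^ d.primeFactors.card
          = -∑ d ∈ m.divisors, ((moebius (m / d) : ℤ) : ℝ) * (1 + κ) ^ d.primeFactors.card := by
        rw [← Finset.sum_neg_distrib]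
        refine Finset.sum_congr rfl fun d hd => ?_
        rw [moebius_prime_mul_div hp hpm (Nat.mem_divisors.mp hd).1 hm0]; ring
      have h2 : ∑ d ∈ m.divisors,
            ((moebius (p * m / (p * d)) : ℤ) : ℝ) * (1 + κ) ^ (p * d).primeFactors.card
          = (1 + κ) * ∑ d ∈ m.divisors,
            ((moebius (m / d) : ℤ) : ℝ) * (1 + κ) ^ d.primeFactors.card := by
        rw [Finset.mul_sum]
        refine Finset.sum_congr rfl fun d hd => ?_
        have hd0 : d ≠ 0 := Nat.pos_of_mem_divisors hd |>.ne'
        have hpd2 : ¬ p ∣ d := fun hc => hpm (hc.trans (Nat.mem_divisors.mp hd).1)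
        rw [Nat.mul_div_mul_left _ _ hp.pos,
          card_primeFactors_prime_mul hp hpd2 hd0, pow_succ]
        ring
      rw [h1, h2, ih m hmlt hmsq, card_primeFactors_prime_mul hp hpm hm0, pow_succ]
      ring

private lemma sumF (κ : ℝ) : ∀ n : ℕ, Squarefree n →
    ∑ d ∈ n.divisors, ((moebius (n / d) : ℤ) : ℝ) *
        (Real.log d * (1 + κ) ^ d.primeFactors.card)
      = Real.log n * κ ^ n.primeFactors.card
        + Real.log n * κ ^ (n.primeFactors.card - 1) := by
  intro n
  induction n using Nat.strong_induction_on with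
  | _ n ih =>
    intro hn
    rcases eq_or_ne n 1 with rfl | hn1
    · simp
    · have hn0 : n ≠ 0 := hn.ne_zero
      set p := n.minFac with hpdef
      have hp : p.Prime := Nat.minFac_prime hn1
      have hpd : p ∣ n := Nat.minFac_dvd n
      obtain ⟨m, hnm⟩ := hpd
      have hm0 : m ≠ 0 := by rintro rfl; exact hn0 (by simp [hnm])
      have hpm : ¬ p ∣ m := by
        intro hc
        exact hp.not_isUnit (hn p (by rw [hnm]; exact mul_dvd_mul_left p hc))
      have hmsq : Squarefree m := hn.squarefree_of_dvd ⟨p, by rw [hnm]; ring⟩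
      have hmlt : m < n := by
        rw [hnm]; exact Nat.lt_mul_iff_one_lt_left (Nat.pos_of_ne_zero hm0) |>.mpr hp.one_lt
      rw [hnm, sum_divisors_prime_mul hp hpm hm0]
      have h1 : ∑ d ∈ m.divisors, ((moebius (p * m / d) : ℤ) : ℝ) *
            (Real.log d * (1 + κ) ^ d.primeFactors.card)
          = -∑ d ∈ m.divisors, ((moebius (m / d) : ℤ) : ℝ) *
            (Real.log d * (1 + κ) ^ d.primeFactors.card) := by
        rw [← Finset.sum_neg_distrib]
        refine Finset.sum_congr rfl fun d hd => ?_
        rw [moebius_prime_mul_div hp hpm (Nat.mem_divisors.mp hd).1 hm0]; ring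
      have h2 : ∑ d ∈ m.divisors, ((moebius (p * m / (p * d)) : ℤ) : ℝ) *
            (Real.log (↑(p * d)) * (1 + κ) ^ (p * d).primeFactors.card)
          = (1 + κ) * (Real.log p *
              ∑ d ∈ m.divisors, ((moebius (m / d) : ℤ) : ℝ) * (1 + κ) ^ d.primeFactors.card
            + ∑ d ∈ m.divisors, ((moebius (m / d) : ℤ) : ℝ) *
              (Real.log d * (1 + κ) ^ d.primeFactors.card)) := by
        rw [Finset.mul_sum, ← Finset.sum_add_distrib, Finset.mul_sum]
        refine Finset.sum_congr rfl fun d hd => ?_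
        have hd0 : d ≠ 0 := Nat.pos_of_mem_divisors hd |>.ne'
        have hpd2 : ¬ p ∣ d := fun hc => hpm (hc.trans (Nat.mem_divisors.mp hd).1)
        rw [Nat.mul_div_mul_left _ _ hp.pos,
          card_primeFactors_prime_mul hp hpd2 hd0, pow_succ]
        push_cast
        rw [Real.log_mul (by exact_mod_cast hp.pos.ne') (by exact_mod_cast hd0)]
        ring
      rw [h1, h2, ih m hmlt hmsq, sumG κ m hmsq,
        card_primeFactors_prime_mul hp hpm hm0, Nat.add_sub_cancel]
      have hlog : Real.log (↑(p * m)) = Real.log p + Real.log m := by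
        push_cast
        exact Real.log_mul (by exact_mod_cast hp.pos.ne') (by exact_mod_cast hm0)
      rw [hlog]
      have hkey : Real.log m * κ ^ (m.primeFactors.card - 1) * κ
          = Real.log m * κ ^ m.primeFactors.card := by
        rcases eq_or_ne m 1 with rfl | hm1
        · simp
        · have hm2 : 1 < m := by omega
          have hk : 1 ≤ m.primeFactors.card :=
            Finset.card_pos.mpr (Nat.nonempty_primeFactors.mpr hm2)
          rw [mul_assoc, mul_comm (κ ^ _) κ, ← pow_succ', Nat.sub_add_cancel hk]
      linear_combination hkey

/-- The Möbius function, real-valued. -/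
noncomputable def muR : ArithmeticFunction ℝ :=
  ((moebius : ArithmeticFunction ℤ) : ArithmeticFunction ℝ)

/-- The constant-one function (on `n ≥ 1`), real-valued. -/
noncomputable def zetaR : ArithmeticFunction ℝ :=
  ((zeta : ArithmeticFunction ℕ) : ArithmeticFunction ℝ)

theorem stmt3 (n : ℕ) (hn : Squarefree n) (κ : ℝ) (hκ : 0 ≤ κ) :
    (muR * log.pmul (tauR (1 + κ))) n
      = Real.log n * κ ^ (cardDistinctFactors n) +
        Real.log n * κ ^ (cardDistinctFactors n - 1) := by
  have hω : (cardDistinctFactors n : ℕ) = n.primeFactors.card := by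
    rw [cardDistinctFactors_apply, Nat.primeFactors, List.card_toFinset]
  have hr : (0 : ℝ) < 1 + κ := by linarith
  rw [hω, mul_apply, Nat.sum_divisorsAntidiagonal'
    (f := fun a b => muR a * (log.pmul (tauR (1 + κ))) b)]
  rw [Finset.sum_congr rfl (fun d hd => ?_), sumF κ n hn]
  have hdsq : Squarefree d := hn.squarefree_of_dvd (Nat.mem_divisors.mp hd).1
  show muR (n / d) * (log.pmul (tauR (1 + κ))) d = _
  rw [muR, intCoe_apply, pmul_apply, log_apply, tauR_squarefree hr hdsq]
end

section
/- For any squarefree positive integer n, any real κ ≥ 0, and any N > 1, the identity (log n / log N)·κ^{ω(n)} + (log n / log N)·κ^{ω(n)−1} = Σ_{d | n} μ(d)·τ_{1+κ}(n/d)·((log n)/(log N) − (log d)/(log N)) holds, with the convention 0^0 = 1. -/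
open ArithmeticFunction

lemma tauR_of_squarefree {r : ℝ} (hr : 0 < r) {m : ℕ} (hm : Squarefree m) :
    tauR r m = r ^ m.primeFactors.card := by
  have hm0 : m ≠ 0 := hm.ne_zero
  have : tauR r m = ∏ p ∈ m.primeFactors,
      Real.Gamma (r + (m.factorization p : ℝ)) /
        (Real.Gamma r * Nat.factorial (m.factorization p)) := by
    simp [tauR, ArithmeticFunction.coe_mk, hm0]
  rw [this, ← Finset.prod_const]
  refine Finset.prod_congr rfl fun p hp => ?_
  have h1 : m.factorization p = 1 := by
    have hle := (Nat.squarefree_iff_factorization_le_one hm0).mp hm p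
    have hpos : m.factorization p ≠ 0 := by
      rwa [← Finsupp.mem_support_iff, Nat.support_factorization]
    omega
  rw [h1]
  rw [show ((1:ℕ):ℝ) = 1 by norm_num, Real.Gamma_add_one hr.ne']
  have := Real.Gamma_pos_of_pos hr
  field_simp
  simp

lemma powerset_filter_not_mem {P : Finset ℕ} {p : ℕ} :
    {t ∈ P.powerset | p ∉ t} = (P.erase p).powerset := by
  ext t
  simp [Finset.subset_erase, and_comm]

lemma binom_sum (Q : Finset ℕ) (x : ℝ) :
    ∑ t ∈ Q.powerset, (-1:ℝ) ^ t.card * (1 + x) ^ (Q.card - t.card) = x ^ Q.card := by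
  have h := Finset.prod_add (fun _ : ℕ => (-1:ℝ)) (fun _ => 1 + x) Q
  have hL : ∏ _i ∈ Q, ((-1:ℝ) + (1 + x)) = x ^ Q.card := by
    rw [Finset.prod_const]; ring_nf
  rw [hL] at h
  rw [h]
  refine Finset.sum_congr rfl fun t ht => ?_
  rw [Finset.mem_powerset] at ht
  rw [Finset.prod_const, Finset.prod_const, Finset.card_sdiff_of_subset ht]

lemma aux_sum (P : Finset ℕ) (w : ℕ → ℝ) (x : ℝ) :
    ∑ t ∈ P.powerset, (-1:ℝ) ^ t.card * (1 + x) ^ (P.card - t.card) *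
        (∑ p ∈ P, w p - ∑ p ∈ t, w p)
    = (∑ p ∈ P, w p) * ((1 + x) * x ^ (P.card - 1)) := by
  have step1 : ∀ t ∈ P.powerset,
      (-1:ℝ) ^ t.card * (1 + x) ^ (P.card - t.card) * (∑ p ∈ P, w p - ∑ p ∈ t, w p)
      = ∑ p ∈ P, (if p ∈ t then 0 else (-1:ℝ) ^ t.card * (1 + x) ^ (P.card - t.card) * w p) := by
    intro t ht
    rw [Finset.mem_powerset] at ht
    rw [← Finset.sum_sdiff_eq_sub ht, Finset.mul_sum, Finset.sum_ite, Finset.sum_const_zero,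
      zero_add]
    apply Finset.sum_congr
    · ext p; simp only [Finset.mem_sdiff, Finset.mem_filter]
    · intros; rfl
  rw [Finset.sum_congr rfl step1, Finset.sum_comm, Finset.sum_mul]
  refine Finset.sum_congr rfl fun p hp => ?_
  have hinner : ∑ t ∈ P.powerset,
      (if p ∈ t then 0 else (-1:ℝ) ^ t.card * (1 + x) ^ (P.card - t.card) * w p)
      = ∑ t ∈ (P.erase p).powerset, (-1:ℝ) ^ t.card * (1 + x) ^ (P.card - t.card) * w p := by
    rw [Finset.sum_ite, Finset.sum_const_zero, zero_add, powerset_filter_not_mem]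
  rw [hinner, ← Finset.sum_mul]
  have hcard : (P.erase p).card = P.card - 1 := Finset.card_erase_of_mem hp
  have hP1 : 1 ≤ P.card := Finset.card_pos.mpr ⟨p, hp⟩
  have key : ∑ t ∈ (P.erase p).powerset, (-1:ℝ) ^ t.card * (1 + x) ^ (P.card - t.card)
      = (1 + x) * x ^ (P.card - 1) := by
    have hb := binom_sum (P.erase p) x
    rw [hcard] at hb
    rw [← hb, Finset.mul_sum]
    refine Finset.sum_congr rfl fun t ht => ?_
    rw [Finset.mem_powerset] at ht
    have htc : t.card ≤ P.card - 1 := hcard ▸ Finset.card_le_card ht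
    have h2 : P.card - t.card = (P.card - 1 - t.card) + 1 := by omega
    rw [h2, pow_succ]
    ring
  rw [key]
  ring

theorem stmt4 (n : ℕ) (hn : Squarefree n) (κ : ℝ) (hκ : 0 ≤ κ) (N : ℝ) (hN : 1 < N) :
    (Real.log n / Real.log N) * κ ^ (cardDistinctFactors n)
      + (Real.log n / Real.log N) * κ ^ (cardDistinctFactors n - 1)
    = ∑ d ∈ n.divisors, (moebius d : ℝ) * tauR (1 + κ) (n / d) *
        (Real.log n / Real.log N - Real.log d / Real.log N) := by
  have hn0 : n ≠ 0 := hn.ne_zero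
  have hκ1 : (0:ℝ) < 1 + κ := by linarith
  set P := n.primeFactors with hPdef
  have hP : ∏ p ∈ P, p = n := Nat.prod_primeFactors_of_squarefree hn
  have homega : cardDistinctFactors n = P.card := by
    rw [cardDistinctFactors_apply, hPdef, ← Nat.toFinset_factors, List.card_toFinset]
  -- log n / log N as a sum over primes
  set w : ℕ → ℝ := fun p => Real.log p / Real.log N with hw
  have hlogprod : ∀ t : Finset ℕ, t ⊆ P →
      Real.log ((∏ p ∈ t, p : ℕ) : ℝ) / Real.log N = ∑ p ∈ t, w p := by
    intro t ht
    have : ((∏ p ∈ t, p : ℕ) : ℝ) = ∏ p ∈ t, (p : ℝ) := by push_cast; rfl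
    rw [this, Real.log_prod (fun p hp => by
      have := (Nat.prime_of_mem_primeFactors (ht hp)).pos
      exact_mod_cast this.ne'), Finset.sum_div]
  have hlogn : Real.log n / Real.log N = ∑ p ∈ P, w p := by
    rw [← hP]; exact hlogprod P (le_refl P)
  -- rewrite the divisor sum over the powerset
  rw [← Nat.divisors_filter_squarefree_of_squarefree hn,
    Nat.sum_divisors_filter_squarefree hn0, Nat.factors_eq, List.toFinset_coe]
  have hsum : ∑ t ∈ n.primeFactorsList.toFinset.powerset,
      ((moebius (t.val.prod) : ℝ) * tauR (1 + κ) (n / t.val.prod) *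
        (Real.log n / Real.log N - Real.log (t.val.prod) / Real.log N))
      = ∑ t ∈ P.powerset, (-1:ℝ) ^ t.card * (1 + κ) ^ (P.card - t.card) *
          (∑ p ∈ P, w p - ∑ p ∈ t, w p) := by
    rw [Nat.toFinset_factors]
    refine Finset.sum_congr rfl fun t ht => ?_
    rw [Finset.mem_powerset] at ht
    have hprodval : t.val.prod = ∏ p ∈ t, p := by rw [Finset.prod_val]; rfl
    have hmu : (moebius (t.val.prod) : ℝ) = (-1:ℝ) ^ t.card := by
      rw [hprodval, ArithmeticFunction.isMultiplicative_moebius.map_prod_of_subset_primeFactors n t ht]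
      rw [Finset.prod_congr rfl (fun p hp => moebius_apply_prime (Nat.prime_of_mem_primeFactors (ht hp)))]
      push_cast [Finset.prod_const]
      ring
    have hdiv : n / t.val.prod = ∏ p ∈ P \ t, p := by
      rw [hprodval, ← Nat.prod_primeFactors_sdiff_of_squarefree hn ht]
    have htau : tauR (1 + κ) (n / t.val.prod) = (1 + κ) ^ (P.card - t.card) := by
      rw [hdiv]
      have hsq : Squarefree (∏ p ∈ P \ t, p) := by
        refine hn.squarefree_of_dvd ?_
        calc (∏ p ∈ P \ t, p) ∣ ∏ p ∈ P, p :=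
              Finset.prod_dvd_prod_of_subset _ _ _ (Finset.sdiff_subset)
          _ = n := hP
      rw [tauR_of_squarefree hκ1 hsq,
        Nat.primeFactors_prod (fun p hp => Nat.prime_of_mem_primeFactors (Finset.mem_sdiff.mp hp).1),
        Finset.card_sdiff_of_subset ht]
    rw [hmu, htau, hlogn, hprodval, hlogprod t ht]
  rw [hsum, aux_sum P w κ, homega, ← hlogn]
  rcases Nat.eq_zero_or_pos P.card with hc | hc
  · have : P = ∅ := Finset.card_eq_zero.mp hc
    have hn1 : n = 1 := by
      rw [← hP, this, Finset.prod_empty]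
    simp [hn1, hc]
  · obtain ⟨m, hm⟩ : ∃ m, P.card = m + 1 := ⟨P.card - 1, by omega⟩
    rw [hm]
    simp only [Nat.add_sub_cancel, pow_succ]
    ring
end
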